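/- The net-degree sequence of a bidirected graph B on vertex set [n] is uniquely realizable — i.e., B is the only bigraph on [n] with that net-degree sequence — if and only if every node of B is a sink or a source and at most one pair of distinct nodes of B is not joined by an edge. Equivalently, for n ≥ 2, a net-degree sequence d ∈ ℤ^n of a bigraph is uniquely realizable if and only if n−2 ≤ |d_i| ≤ n−1 for all i = 1,…,n and at most two entries of d have absolute value n−2. -/

import Mathlib

set_option maxHeartbeats 1000000


/-- A bidirected graph (bigraph) on vertex set `Fin n`, encoded by its bidirection
function: `bd u v` is the local orientation `τ(u, uv) ∈ {−1,+1}` of the edge `uv` at its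
endpoint `u` if `uv` is an edge, and `0` if `u` and `v` are not joined by an edge. -/
structure Bigraph (n : ℕ) where
  bd : Fin n → Fin n → ℤ
  bd_mem : ∀ u v, bd u v = -1 ∨ bd u v = 0 ∨ bd u v = 1
  loopless : ∀ v, bd v v = 0
  adj_symm : ∀ u v, bd u v = 0 ↔ bd v u = 0

/-- The net-degree of a node `v`: the sum of the local orientations at `v` of all edges
incident to `v`. -/
def Bigraph.netDeg {n : ℕ} (B : Bigraph n) (v : Fin n) : ℤ := ∑ u, B.bd v u

/-- A node `v` is a sink if every incident edge points into `v`. -/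
def Bigraph.IsSink {n : ℕ} (B : Bigraph n) (v : Fin n) : Prop :=
  ∀ u, B.bd v u = 0 ∨ B.bd v u = 1

/-- A node `v` is a source if every incident edge points away from `v`. -/
def Bigraph.IsSource {n : ℕ} (B : Bigraph n) (v : Fin n) : Prop :=
  ∀ u, B.bd v u = 0 ∨ B.bd v u = -1

namespace BigraphAux

variable {n : ℕ}

lemma bigraph_ext {B B' : Bigraph n} (h : B.bd = B'.bd) : B = B' := by
  cases B; cases B'; cases h; rfl

lemma sum_eq_of_eq_off {f g : Fin n → ℤ} (s : Finset (Fin n))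
    (h : ∀ x ∉ s, f x = g x) (h2 : ∑ x ∈ s, f x = ∑ x ∈ s, g x) :
    ∑ x, f x = ∑ x, g x := by
  rw [← Finset.sum_add_sum_compl s f, ← Finset.sum_add_sum_compl s g, h2]
  congr 1
  exact Finset.sum_congr rfl fun x hx => h x (by simpa using hx)

lemma sum_eq_two {f g : Fin n → ℤ} {a b : Fin n} (hab : a ≠ b)
    (h : ∀ x, x ≠ a → x ≠ b → f x = g x) (h2 : f a + f b = g a + g b) :
    ∑ x, f x = ∑ x, g x := by
  apply sum_eq_of_eq_off {a, b}
  · intro x hx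
    simp only [Finset.mem_insert, Finset.mem_singleton, not_or] at hx
    exact h x hx.1 hx.2
  · rw [Finset.sum_pair hab, Finset.sum_pair hab]; exact h2

lemma netDeg_erase (B : Bigraph n) (v : Fin n) :
    ∑ u ∈ Finset.univ.erase v, B.bd v u = B.netDeg v :=
  Finset.sum_erase _ (B.loopless v)

lemma card_erase (v : Fin n) : (Finset.univ.erase v).card = n - 1 := by
  rw [Finset.card_erase_of_mem (Finset.mem_univ v), Finset.card_univ, Fintype.card_fin]

lemma row_all {B : Bigraph n} {v : Fin n} {e : ℤ} (he : e = 1 ∨ e = -1)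
    (hd : B.netDeg v = e * ((n : ℤ) - 1)) : ∀ u, u ≠ v → B.bd v u = e := by
  have hn : 1 ≤ n := Nat.one_le_iff_ne_zero.mpr (by rintro rfl; exact v.elim0)
  have key : ∑ u ∈ Finset.univ.erase v, (1 - e * B.bd v u) = 0 := by
    rw [Finset.sum_sub_distrib, ← Finset.mul_sum, netDeg_erase, hd, Finset.sum_const,
      card_erase]
    rcases he with rfl | rfl <;> simp [nsmul_eq_mul] <;> omega
  have hnn : ∀ u ∈ Finset.univ.erase v, 0 ≤ 1 - e * B.bd v u := by
    intro u _
    rcases B.bd_mem v u with h | h | h <;> rcases he with rfl | rfl <;> rw [h] <;> norm_num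
  intro u hu
  have := (Finset.sum_eq_zero_iff_of_nonneg hnn).mp key u (by simp [hu])
  rcases B.bd_mem v u with h | h | h <;> rcases he with rfl | rfl <;> omega

lemma row_one_zero {B : Bigraph n} {v : Fin n} {e : ℤ} (he : e = 1 ∨ e = -1)
    (hd : B.netDeg v = e * ((n : ℤ) - 2)) :
    ∃ w, w ≠ v ∧ B.bd v w = 0 ∧ ∀ u, u ≠ v → u ≠ w → B.bd v u = e := by
  have hn : 1 ≤ n := Nat.one_le_iff_ne_zero.mpr (by rintro rfl; exact v.elim0)
  have key : ∑ u ∈ Finset.univ.erase v, (1 - e * B.bd v u) = 1 := by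
    rw [Finset.sum_sub_distrib, ← Finset.mul_sum, netDeg_erase, hd, Finset.sum_const,
      card_erase]
    rcases he with rfl | rfl <;> simp [nsmul_eq_mul] <;> omega
  have hnn : ∀ u ∈ Finset.univ.erase v, 0 ≤ 1 - e * B.bd v u := by
    intro u _
    rcases B.bd_mem v u with h | h | h <;> rcases he with rfl | rfl <;> rw [h] <;> norm_num
  obtain ⟨w, hw, hwne⟩ : ∃ w ∈ Finset.univ.erase v, 1 - e * B.bd v w ≠ 0 := by
    by_contra hcon
    push_neg at hcon
    rw [Finset.sum_eq_zero hcon] at key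
    omega
  have hwv : w ≠ v := (Finset.mem_erase.mp hw).1
  have hw0 : B.bd v w = 0 := by
    have hle := Finset.single_le_sum hnn hw
    rw [key] at hle
    rcases B.bd_mem v w with h | h | h <;> rcases he with rfl | rfl <;> omega
  refine ⟨w, hwv, hw0, fun u huv huw => ?_⟩
  have hsub : ({u, w} : Finset (Fin n)) ⊆ Finset.univ.erase v := by
    intro x hx
    simp only [Finset.mem_insert, Finset.mem_singleton] at hx
    rcases hx with rfl | rfl <;> simp [huv, hwv]
  have hle := Finset.sum_le_sum_of_subset_of_nonneg hsub (fun x hx _ => hnn x hx)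
  rw [Finset.sum_pair huw, key, hw0] at hle
  rcases B.bd_mem v u with h | h | h <;> rcases he with rfl | rfl <;> omega

lemma netDeg_of_row_all {B : Bigraph n} {v : Fin n} {e : ℤ}
    (h : ∀ u, u ≠ v → B.bd v u = e) : B.netDeg v = e * ((n : ℤ) - 1) := by
  have hn : 1 ≤ n := Nat.one_le_iff_ne_zero.mpr (by rintro rfl; exact v.elim0)
  rw [← netDeg_erase]
  rw [Finset.sum_congr rfl (fun u hu => h u (Finset.mem_erase.mp hu).1), Finset.sum_const,
    card_erase, nsmul_eq_mul, Nat.cast_sub hn]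
  push_cast
  ring

lemma netDeg_of_row_one_zero {B : Bigraph n} {v w : Fin n} {e : ℤ} (hwv : w ≠ v)
    (hw0 : B.bd v w = 0) (h : ∀ u, u ≠ v → u ≠ w → B.bd v u = e) :
    B.netDeg v = e * ((n : ℤ) - 2) := by
  have hn : 2 ≤ n := by
    have := Fintype.card_le_of_injective (fun b : Fin 2 => if b = 0 then v else w)
      (by intro x y hxy; fin_cases x <;> fin_cases y <;> simp_all <;> exact absurd hxy.symm hwv)
    simpa using this
  rw [← netDeg_erase, ← Finset.sum_erase_add _ _ (Finset.mem_erase.mpr ⟨hwv, Finset.mem_univ w⟩),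
    hw0, add_zero]
  rw [Finset.sum_congr rfl (fun u hu => by
    have h1 := Finset.mem_erase.mp hu
    have h2 := Finset.mem_erase.mp h1.2
    exact h u h2.1 h1.1), Finset.sum_const]
  rw [Finset.card_erase_of_mem (Finset.mem_erase.mpr ⟨hwv, Finset.mem_univ w⟩), card_erase,
    nsmul_eq_mul]
  have : n - 1 - 1 = n - 2 := by omega
  rw [this, Nat.cast_sub hn]
  push_cast
  ring



/-- A1: a mixed vertex allows a different realization. -/
lemma not_unique_of_mixed {B : Bigraph n} {v a b : Fin n}
    (ha : B.bd v a = 1) (hb : B.bd v b = -1) :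
    ∃ B' : Bigraph n, B'.netDeg = B.netDeg ∧ B' ≠ B := by
  have hab : a ≠ b := by rintro rfl; omega
  have hav : a ≠ v := by rintro rfl; rw [B.loopless] at ha; omega
  have hbv : b ≠ v := by rintro rfl; rw [B.loopless] at hb; omega
  have hsa : B.bd a v ≠ 0 := fun h => by rw [B.adj_symm] at h; omega
  have hsb : B.bd b v ≠ 0 := fun h => by rw [B.adj_symm] at h; omega
  refine ⟨⟨fun u w => if u = v ∧ w = a then -1 else if u = v ∧ w = b then 1 else B.bd u w,
      ?_, ?_, ?_⟩, ?_, ?_⟩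
  · intro u w; split_ifs <;> simp [B.bd_mem]
  · intro u
    split_ifs <;> (repeat obtain ⟨rfl, rfl⟩ := ‹_ ∧ _›) <;>
      first | exact B.loopless _ | simp_all
  · intro u w
    split_ifs <;> (repeat obtain ⟨rfl, rfl⟩ := ‹_ ∧ _›) <;>
      first | exact Iff.rfl | exact B.adj_symm u w | (simp_all <;> try omega)
  · funext x
    show (∑ u, (if x = v ∧ u = a then -1 else if x = v ∧ u = b then 1 else B.bd x u))
        = ∑ u, B.bd x u
    by_cases hx : x = v
    · subst hx
      apply sum_eq_two hab
      · intro u hu1 hu2; simp [hu1, hu2]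
      · simp [hab, Ne.symm hab, ha, hb]
    · exact Finset.sum_congr rfl fun u _ => by simp [hx]
  · intro hcon
    have : (-1 : ℤ) = B.bd v a := by
      have := congrFun (congrFun (congrArg Bigraph.bd hcon) v) a
      simpa using this
    omega



lemma not_pair_self {u p q : Fin n} (hpq : p ≠ q) : ¬(u = p ∧ u = q) :=
  fun h => hpq (h.1.symm.trans h.2)

/-- E2: three pairwise non-adjacent vertices: add an alternating triangle. -/
lemma not_unique_triangle {B : Bigraph n} {a b c : Fin n}
    (hab : a ≠ b) (hac : a ≠ c) (hbc : b ≠ c)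
    (h1 : B.bd a b = 0) (h2 : B.bd a c = 0) (h3 : B.bd b c = 0) :
    ∃ B' : Bigraph n, B'.netDeg = B.netDeg ∧ B' ≠ B := by
  have h1' : B.bd b a = 0 := (B.adj_symm a b).mp h1
  have h2' : B.bd c a = 0 := (B.adj_symm a c).mp h2
  have h3' : B.bd c b = 0 := (B.adj_symm b c).mp h3
  have hchar : ∀ u w, ((if u = a ∧ w = b then (1:ℤ) else if u = b ∧ w = a then 1
      else if u = a ∧ w = c then -1 else if u = c ∧ w = a then -1
      else if u = b ∧ w = c then -1 else if u = c ∧ w = b then 1 else B.bd u w) = 0) ↔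
      (B.bd u w = 0 ∧ ¬((u = a ∧ w = b) ∨ (u = b ∧ w = a) ∨ (u = a ∧ w = c) ∨
        (u = c ∧ w = a) ∨ (u = b ∧ w = c) ∨ (u = c ∧ w = b))) := by
    intro u w
    split_ifs with k1 k2 k3 k4 k5 k6 <;>
      (repeat obtain ⟨rfl, rfl⟩ := ‹_ ∧ _›) <;>
      simp_all [hab, hac, hbc, Ne.symm hab, Ne.symm hac, Ne.symm hbc]
  refine ⟨⟨fun u w =>
      if u = a ∧ w = b then 1 else if u = b ∧ w = a then 1
      else if u = a ∧ w = c then -1 else if u = c ∧ w = a then -1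
      else if u = b ∧ w = c then -1 else if u = c ∧ w = b then 1 else B.bd u w,
      ?_, ?_, ?_⟩, ?_, ?_⟩
  · intro u w; split_ifs <;> first | exact B.bd_mem _ _ | norm_num
  · intro u
    rw [if_neg (not_pair_self hab), if_neg (not_pair_self hab.symm),
      if_neg (not_pair_self hac), if_neg (not_pair_self hac.symm),
      if_neg (not_pair_self hbc), if_neg (not_pair_self hbc.symm)]
    exact B.loopless u
  · intro u w
    rw [hchar u w, hchar w u]
    have := B.adj_symm u w
    tauto
  · funext x
    dsimp only [Bigraph.netDeg]
    by_cases hxa : x = a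
    · subst hxa
      apply sum_eq_two hbc
      · intro u hu1 hu2
        simp [hu1, hu2, hab, hac, hbc, Ne.symm hab, Ne.symm hac, Ne.symm hbc]
      · simp [hab, hac, hbc, Ne.symm hab, Ne.symm hac, Ne.symm hbc, h1, h2]
    · by_cases hxb : x = b
      · subst hxb
        apply sum_eq_two hac
        · intro u hu1 hu2
          simp [hu1, hu2, hab, hac, hbc, Ne.symm hab, Ne.symm hac, Ne.symm hbc]
        · simp [hab, hac, hbc, Ne.symm hab, Ne.symm hac, Ne.symm hbc, h1', h3]
      · by_cases hxc : x = c
        · subst hxc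
          apply sum_eq_two hab
          · intro u hu1 hu2
            simp [hu1, hu2, hab, hac, hbc, Ne.symm hab, Ne.symm hac, Ne.symm hbc]
          · simp [hab, hac, hbc, Ne.symm hab, Ne.symm hac, Ne.symm hbc, h2', h3']
        · exact Finset.sum_congr rfl fun u _ => by simp [hxa, hxb, hxc]
  · intro hcon
    have : (1 : ℤ) = B.bd a b := by
      have := congrFun (congrFun (congrArg Bigraph.bd hcon) a) b
      simpa using this
    omega

/-- E1: vertex a non-adjacent to b and c, while bc is an edge: reroute. -/
lemma not_unique_reroute {B : Bigraph n} {a b c : Fin n}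
    (hab : a ≠ b) (hac : a ≠ c) (hbc : b ≠ c)
    (h1 : B.bd a b = 0) (h2 : B.bd a c = 0) (h3 : B.bd b c ≠ 0) :
    ∃ B' : Bigraph n, B'.netDeg = B.netDeg ∧ B' ≠ B := by
  have h1' : B.bd b a = 0 := (B.adj_symm a b).mp h1
  have h2' : B.bd c a = 0 := (B.adj_symm a c).mp h2
  have h3' : B.bd c b ≠ 0 := fun h => h3 ((B.adj_symm b c).mpr h)
  have hchar : ∀ u w, ((if u = a ∧ w = b then (1:ℤ) else if u = b ∧ w = a then B.bd b c
      else if u = a ∧ w = c then -1 else if u = c ∧ w = a then B.bd c b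
      else if u = b ∧ w = c then 0 else if u = c ∧ w = b then 0 else B.bd u w) = 0) ↔
      (((u = b ∧ w = c) ∨ (u = c ∧ w = b)) ∨
        (B.bd u w = 0 ∧ ¬((u = a ∧ w = b) ∨ (u = b ∧ w = a) ∨ (u = a ∧ w = c) ∨
          (u = c ∧ w = a)))) := by
    intro u w
    split_ifs with k1 k2 k3 k4 k5 k6 <;>
      (repeat obtain ⟨rfl, rfl⟩ := ‹_ ∧ _›) <;>
      simp_all [hab, hac, hbc, Ne.symm hab, Ne.symm hac, Ne.symm hbc]
  refine ⟨⟨fun u w =>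
      if u = a ∧ w = b then 1 else if u = b ∧ w = a then B.bd b c
      else if u = a ∧ w = c then -1 else if u = c ∧ w = a then B.bd c b
      else if u = b ∧ w = c then 0 else if u = c ∧ w = b then 0 else B.bd u w,
      ?_, ?_, ?_⟩, ?_, ?_⟩
  · intro u w; split_ifs <;> first | exact B.bd_mem _ _ | norm_num
  · intro u
    rw [if_neg (not_pair_self hab), if_neg (not_pair_self hab.symm),
      if_neg (not_pair_self hac), if_neg (not_pair_self hac.symm),
      if_neg (not_pair_self hbc), if_neg (not_pair_self hbc.symm)]
    exact B.loopless u
  · intro u w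
    rw [hchar u w, hchar w u]
    have := B.adj_symm u w
    tauto
  · funext x
    dsimp only [Bigraph.netDeg]
    by_cases hxa : x = a
    · subst hxa
      apply sum_eq_two hbc
      · intro u hu1 hu2
        simp [hu1, hu2, hab, hac, hbc, Ne.symm hab, Ne.symm hac, Ne.symm hbc]
      · simp [hab, hac, hbc, Ne.symm hab, Ne.symm hac, Ne.symm hbc, h1, h2]
    · by_cases hxb : x = b
      · subst hxb
        apply sum_eq_two hac
        · intro u hu1 hu2
          simp [hu1, hu2, hab, hac, hbc, Ne.symm hab, Ne.symm hac, Ne.symm hbc]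
        · simp [hab, hac, hbc, Ne.symm hab, Ne.symm hac, Ne.symm hbc, h1']
      · by_cases hxc : x = c
        · subst hxc
          apply sum_eq_two hab
          · intro u hu1 hu2
            simp [hu1, hu2, hab, hac, hbc, Ne.symm hab, Ne.symm hac, Ne.symm hbc]
          · simp [hab, hac, hbc, Ne.symm hab, Ne.symm hac, Ne.symm hbc, h2']
        · exact Finset.sum_congr rfl fun u _ => by simp [hxa, hxb, hxc]
  · intro hcon
    have : (1 : ℤ) = B.bd a b := by
      have := congrFun (congrFun (congrArg Bigraph.bd hcon) a) b
      simpa using this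
    omega

/-- E3: two disjoint non-adjacent pairs ab, cd with ac and bd edges: swap. -/
lemma not_unique_swap {B : Bigraph n} {a b c d : Fin n}
    (hab : a ≠ b) (hac : a ≠ c) (had : a ≠ d) (hbc : b ≠ c) (hbd : b ≠ d) (hcd : c ≠ d)
    (h1 : B.bd a b = 0) (h2 : B.bd c d = 0) (h3 : B.bd a c ≠ 0) (h4 : B.bd b d ≠ 0) :
    ∃ B' : Bigraph n, B'.netDeg = B.netDeg ∧ B' ≠ B := by
  have h1' : B.bd b a = 0 := (B.adj_symm a b).mp h1
  have h2' : B.bd d c = 0 := (B.adj_symm c d).mp h2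
  have h3' : B.bd c a ≠ 0 := fun h => h3 ((B.adj_symm a c).mpr h)
  have h4' : B.bd d b ≠ 0 := fun h => h4 ((B.adj_symm b d).mpr h)
  have hchar : ∀ u w, ((if u = a ∧ w = b then B.bd a c else if u = b ∧ w = a then B.bd b d
      else if u = c ∧ w = d then B.bd c a else if u = d ∧ w = c then B.bd d b
      else if u = a ∧ w = c then 0 else if u = c ∧ w = a then 0
      else if u = b ∧ w = d then 0 else if u = d ∧ w = b then 0 else B.bd u w) = 0) ↔
      (((u = a ∧ w = c) ∨ (u = c ∧ w = a) ∨ (u = b ∧ w = d) ∨ (u = d ∧ w = b)) ∨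
        (B.bd u w = 0 ∧ ¬((u = a ∧ w = b) ∨ (u = b ∧ w = a) ∨ (u = c ∧ w = d) ∨
          (u = d ∧ w = c)))) := by
    intro u w
    split_ifs with k1 k2 k3 k4 k5 k6 k7 k8 <;>
      (repeat obtain ⟨rfl, rfl⟩ := ‹_ ∧ _›) <;>
      simp_all [hab, hac, had, hbc, hbd, hcd, Ne.symm hab, Ne.symm hac, Ne.symm had,
        Ne.symm hbc, Ne.symm hbd, Ne.symm hcd]
  refine ⟨⟨fun u w =>
      if u = a ∧ w = b then B.bd a c else if u = b ∧ w = a then B.bd b d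
      else if u = c ∧ w = d then B.bd c a else if u = d ∧ w = c then B.bd d b
      else if u = a ∧ w = c then 0 else if u = c ∧ w = a then 0
      else if u = b ∧ w = d then 0 else if u = d ∧ w = b then 0 else B.bd u w,
      ?_, ?_, ?_⟩, ?_, ?_⟩
  · intro u w; split_ifs <;> first | exact B.bd_mem _ _ | norm_num
  · intro u
    rw [if_neg (not_pair_self hab), if_neg (not_pair_self hab.symm),
      if_neg (not_pair_self hcd), if_neg (not_pair_self hcd.symm),
      if_neg (not_pair_self hac), if_neg (not_pair_self hac.symm),
      if_neg (not_pair_self hbd), if_neg (not_pair_self hbd.symm)]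
    exact B.loopless u
  · intro u w
    rw [hchar u w, hchar w u]
    have hz := B.adj_symm u w
    have tmap : ∀ {x y : Fin n},
        ((y = a ∧ x = b) ∨ (y = b ∧ x = a) ∨ (y = c ∧ x = d) ∨ (y = d ∧ x = c)) →
        ((x = a ∧ y = b) ∨ (x = b ∧ y = a) ∨ (x = c ∧ y = d) ∨ (x = d ∧ y = c)) := by
      rintro x y (⟨p, q⟩ | ⟨p, q⟩ | ⟨p, q⟩ | ⟨p, q⟩)
      · exact Or.inr (Or.inl ⟨q, p⟩)
      · exact Or.inl ⟨q, p⟩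
      · exact Or.inr (Or.inr (Or.inr ⟨q, p⟩))
      · exact Or.inr (Or.inr (Or.inl ⟨q, p⟩))
    constructor <;> rintro ((⟨p, q⟩ | ⟨p, q⟩ | ⟨p, q⟩ | ⟨p, q⟩) | ⟨p, ht⟩)
    · exact Or.inl (Or.inr (Or.inl ⟨q, p⟩))
    · exact Or.inl (Or.inl ⟨q, p⟩)
    · exact Or.inl (Or.inr (Or.inr (Or.inr ⟨q, p⟩)))
    · exact Or.inl (Or.inr (Or.inr (Or.inl ⟨q, p⟩)))
    · exact Or.inr ⟨hz.mp p, fun h => ht (tmap h)⟩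
    · exact Or.inl (Or.inr (Or.inl ⟨q, p⟩))
    · exact Or.inl (Or.inl ⟨q, p⟩)
    · exact Or.inl (Or.inr (Or.inr (Or.inr ⟨q, p⟩)))
    · exact Or.inl (Or.inr (Or.inr (Or.inl ⟨q, p⟩)))
    · exact Or.inr ⟨hz.mpr p, fun h => ht (tmap h)⟩
  · funext x
    dsimp only [Bigraph.netDeg]
    by_cases hxa : x = a
    · subst hxa
      apply sum_eq_two hbc
      · intro u hu1 hu2
        simp [hu1, hu2, hab, hac, had, hbc, hbd, hcd,
          Ne.symm hab, Ne.symm hac, Ne.symm had, Ne.symm hbc, Ne.symm hbd, Ne.symm hcd]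
      · simp [hab, hac, had, hbc, hbd, hcd,
          Ne.symm hab, Ne.symm hac, Ne.symm had, Ne.symm hbc, Ne.symm hbd, Ne.symm hcd, h1]
    · by_cases hxb : x = b
      · subst hxb
        apply sum_eq_two had
        · intro u hu1 hu2
          simp [hu1, hu2, hab, hac, had, hbc, hbd, hcd,
            Ne.symm hab, Ne.symm hac, Ne.symm had, Ne.symm hbc, Ne.symm hbd, Ne.symm hcd]
        · simp [hab, hac, had, hbc, hbd, hcd,
            Ne.symm hab, Ne.symm hac, Ne.symm had, Ne.symm hbc, Ne.symm hbd, Ne.symm hcd, h1']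
      · by_cases hxc : x = c
        · subst hxc
          apply sum_eq_two (Ne.symm had)
          · intro u hu1 hu2
            simp [hu1, hu2, hab, hac, had, hbc, hbd, hcd,
              Ne.symm hab, Ne.symm hac, Ne.symm had, Ne.symm hbc, Ne.symm hbd, Ne.symm hcd]
          · simp [hab, hac, had, hbc, hbd, hcd,
              Ne.symm hab, Ne.symm hac, Ne.symm had, Ne.symm hbc, Ne.symm hbd, Ne.symm hcd, h2]
        · by_cases hxd : x = d
          · subst hxd
            apply sum_eq_two (Ne.symm hbc)
            · intro u hu1 hu2
              simp [hu1, hu2, hab, hac, had, hbc, hbd, hcd,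
                Ne.symm hab, Ne.symm hac, Ne.symm had, Ne.symm hbc, Ne.symm hbd, Ne.symm hcd]
            · simp [hab, hac, had, hbc, hbd, hcd,
                Ne.symm hab, Ne.symm hac, Ne.symm had, Ne.symm hbc, Ne.symm hbd, Ne.symm hcd, h2']
          · exact Finset.sum_congr rfl fun u _ => by simp [hxa, hxb, hxc, hxd]
  · intro hcon
    have : B.bd a c = B.bd a b := by
      have := congrFun (congrFun (congrArg Bigraph.bd hcon) a) b
      simpa using this
    rw [h1] at this
    exact h3 this



/-- Shared-vertex case: x non-adjacent to both y and z. -/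
lemma not_unique_shared {B : Bigraph n} {x y z : Fin n}
    (hxy : x ≠ y) (hxz : x ≠ z) (hyz : y ≠ z)
    (h1 : B.bd x y = 0) (h2 : B.bd x z = 0) :
    ∃ B' : Bigraph n, B'.netDeg = B.netDeg ∧ B' ≠ B := by
  by_cases h3 : B.bd y z = 0
  · exact not_unique_triangle hxy hxz hyz h1 h2 h3
  · exact not_unique_reroute hxy hxz hyz h1 h2 h3

/-- Two distinct missing (ordered) pairs give a different realization. -/
lemma not_unique_two_missing {B : Bigraph n} {a b c d : Fin n}
    (hab : a < b) (hcd : c < d) (h1 : B.bd a b = 0) (h2 : B.bd c d = 0)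
    (hne : (a, b) ≠ (c, d)) :
    ∃ B' : Bigraph n, B'.netDeg = B.netDeg ∧ B' ≠ B := by
  have hab' : a ≠ b := ne_of_lt hab
  have hcd' : c ≠ d := ne_of_lt hcd
  by_cases hac : a = c
  · -- shared first vertex: pairs (a,b), (a,d), b ≠ d
    subst hac
    have hbd : b ≠ d := fun h => hne (by rw [h])
    exact not_unique_shared hab' (ne_of_lt hcd) hbd h1 h2
  · by_cases had : a = d
    · -- a = d: pairs (a,b) and (c,a): a adjacent to neither b nor c
      subst had
      have hbc : b ≠ c := by
        intro h; subst h
        exact absurd (lt_trans hab hcd) (lt_irrefl a)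
      exact not_unique_shared hab' (Ne.symm (ne_of_lt hcd)) hbc h1
        ((B.adj_symm c a).mp h2)
    · by_cases hbc : b = c
      · -- b = c: pairs (a,b), (b,d): b adjacent to neither a nor d
        subst hbc
        have had2 : a ≠ d := fun h => absurd (h ▸ hab) (not_lt_of_gt (h ▸ hcd))
        exact not_unique_shared (Ne.symm hab') hcd' had2 ((B.adj_symm a b).mp h1) h2
      · by_cases hbd : b = d
        · -- b = d: pairs (a,b), (c,b): b adjacent to neither a nor c
          subst hbd
          have hac2 : a ≠ c := hac
          exact not_unique_shared (Ne.symm hab') (Ne.symm hcd')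
            (fun h => hne (by rw [h])) ((B.adj_symm a b).mp h1)
            ((B.adj_symm c b).mp h2)
        · -- all four distinct
          by_cases hacz : B.bd a c = 0
          · exact not_unique_shared hab' hac hbc h1 hacz
          · by_cases hbdz : B.bd b d = 0
            · exact not_unique_shared (Ne.symm hab') hbd
                had ((B.adj_symm a b).mp h1) hbdz
            · exact not_unique_swap hab' hac had hbc hbd hcd' h1 h2 hacz hbdz

/-- Complete pure rows are determined by their net-degree. -/
lemma row_determined {B B' : Bigraph n} {v : Fin n} {e : ℤ} (he : e = 1 ∨ e = -1)
    (hfull : ∀ u, u ≠ v → B.bd v u = e)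
    (hdeg : B'.netDeg v = B.netDeg v) : ∀ u, B'.bd v u = B.bd v u := by
  have hd : B'.netDeg v = e * ((n : ℤ) - 1) := by rw [hdeg, netDeg_of_row_all hfull]
  intro u
  by_cases hu : u = v
  · subst hu; rw [B.loopless, B'.loopless]
  · rw [row_all he hd u hu, hfull u hu]



lemma getSign {B : Bigraph n} (hpure : ∀ v, B.IsSink v ∨ B.IsSource v) (v : Fin n) :
    ∃ e, (e = (1:ℤ) ∨ e = -1) ∧ ∀ u, B.bd v u = 0 ∨ B.bd v u = e := by
  rcases hpure v with h | h
  exacts [⟨1, Or.inl rfl, h⟩, ⟨-1, Or.inr rfl, h⟩]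

lemma row_determined_one_zero {B B' : Bigraph n} {v w₀ : Fin n} {e : ℤ}
    (he : e = 1 ∨ e = -1) (hvw : w₀ ≠ v) (hz : B.bd v w₀ = 0)
    (hrest : ∀ u, u ≠ v → u ≠ w₀ → B.bd v u = e)
    (hdeg : B'.netDeg v = B.netDeg v)
    (hother : ∀ u, u ≠ v → u ≠ w₀ → B'.bd u v ≠ 0) :
    ∀ u, B'.bd v u = B.bd v u := by
  have hd : B'.netDeg v = e * ((n : ℤ) - 2) := by
    rw [hdeg, netDeg_of_row_one_zero hvw hz hrest]
  obtain ⟨w, hwv, hw0, hwrest⟩ := row_one_zero he hd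
  have hww : w = w₀ := by
    by_contra hne
    exact hother w hwv hne ((B'.adj_symm v w).mp hw0)
  subst hww
  intro u
  by_cases hu1 : u = v
  · subst hu1; rw [B.loopless, B'.loopless]
  · by_cases hu2 : u = w
    · subst hu2; rw [hw0, hz]
    · rw [hwrest u hu1 hu2, hrest u hu1 hu2]

lemma unique_of_pure_missing {B : Bigraph n}
    (hpure : ∀ v, B.IsSink v ∨ B.IsSource v)
    (hcard : {p : Fin n × Fin n | p.1 < p.2 ∧ B.bd p.1 p.2 = 0}.ncard ≤ 1) :
    ∀ B' : Bigraph n, B'.netDeg = B.netDeg → B' = B := by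
  intro B' hdeg
  have hM : ∀ {p q : Fin n × Fin n}, p ∈ {p : Fin n × Fin n | p.1 < p.2 ∧ B.bd p.1 p.2 = 0} →
      q ∈ {p : Fin n × Fin n | p.1 < p.2 ∧ B.bd p.1 p.2 = 0} → p = q := fun hp hq =>
    (Set.ncard_le_one_iff (Set.toFinite _)).mp hcard hp hq
  have hrows : ∀ v : Fin n, (∀ u, u ≠ v → B.bd v u ≠ 0) → ∀ u, B'.bd v u = B.bd v u := by
    intro v hv
    obtain ⟨e, he, hrow⟩ := getSign hpure v
    have hfull : ∀ u, u ≠ v → B.bd v u = e := fun u hu => (hrow u).resolve_left (hv u hu)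
    exact row_determined he hfull (congrFun hdeg v)
  by_cases hex : ∃ p : Fin n × Fin n, p.1 < p.2 ∧ B.bd p.1 p.2 = 0
  · obtain ⟨⟨a, b⟩, hab, habz⟩ := hex
    have hab' : a ≠ b := ne_of_lt hab
    have huniq : ∀ u w : Fin n, u ≠ w → B.bd u w = 0 →
        (u = a ∧ w = b) ∨ (u = b ∧ w = a) := by
      intro u w huw h0
      rcases lt_or_gt_of_ne huw with h | h
      · have := hM (p := (u, w)) (q := (a, b)) ⟨h, h0⟩ ⟨hab, habz⟩
        left
        exact ⟨congrArg Prod.fst this, congrArg Prod.snd this⟩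
      · have := hM (p := (w, u)) (q := (a, b)) ⟨h, (B.adj_symm u w).mp h0⟩ ⟨hab, habz⟩
        right
        exact ⟨congrArg Prod.snd this, congrArg Prod.fst this⟩
    have hoff : ∀ v, v ≠ a → v ≠ b → ∀ u, B'.bd v u = B.bd v u := by
      intro v hva hvb
      apply hrows
      intro u huv hz
      rcases huniq v u (fun h => huv h.symm) hz with ⟨h1, _⟩ | ⟨h1, _⟩
      · exact hva h1
      · exact hvb h1
    have hBnz : ∀ v u : Fin n, v ≠ u → v ≠ a → v ≠ b → B.bd v u ≠ 0 := by
      intro v u hvu hva hvb h0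
      rcases huniq v u hvu h0 with ⟨h1, _⟩ | ⟨h1, _⟩
      · exact hva h1
      · exact hvb h1
    have hata : ∀ u, B'.bd a u = B.bd a u := by
      obtain ⟨e, he, hrow⟩ := getSign hpure a
      apply row_determined_one_zero he (Ne.symm hab') habz
      · intro u hu1 hu2
        refine (hrow u).resolve_left fun h0 => ?_
        rcases huniq a u (fun h => hu1 h.symm) h0 with ⟨_, h2⟩ | ⟨h1, _⟩
        · exact hu2 h2
        · exact hab' h1
      · exact congrFun hdeg a
      · intro u hu1 hu2
        rw [hoff u hu1 hu2]
        exact hBnz u a hu1 hu1 hu2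
    have hatb : ∀ u, B'.bd b u = B.bd b u := by
      obtain ⟨e, he, hrow⟩ := getSign hpure b
      apply row_determined_one_zero he hab' ((B.adj_symm a b).mp habz)
      · intro u hu1 hu2
        refine (hrow u).resolve_left fun h0 => ?_
        rcases huniq b u (fun h => hu1 h.symm) h0 with ⟨h1, _⟩ | ⟨_, h2⟩
        · exact hab' h1.symm
        · exact hu2 h2
      · exact congrFun hdeg b
      · intro u hu1 hu2
        rw [hoff u hu2 hu1]
        exact hBnz u b hu1 hu2 hu1
    apply bigraph_ext
    funext v u
    by_cases hva : v = a
    · subst hva; exact hata u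
    · by_cases hvb : v = b
      · subst hvb; exact hatb u
      · exact hoff v hva hvb u
  · apply bigraph_ext
    funext v u
    refine (hrows v ?_) u
    intro u' hu' h0
    apply hex
    rcases lt_or_gt_of_ne (Ne.symm hu') with h | h
    · exact ⟨(v, u'), h, h0⟩
    · exact ⟨(u', v), h, (B.adj_symm v u').mp h0⟩



lemma pure_missing_of_unique {B : Bigraph n}
    (hu : ∀ B' : Bigraph n, B'.netDeg = B.netDeg → B' = B) :
    (∀ v, B.IsSink v ∨ B.IsSource v) ∧
      {p : Fin n × Fin n | p.1 < p.2 ∧ B.bd p.1 p.2 = 0}.ncard ≤ 1 := by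
  constructor
  · intro v
    by_contra hv
    push_neg at hv
    obtain ⟨hs1, hs2⟩ := hv
    have hpos : ∃ a, B.bd v a = 1 := by
      by_contra h
      push_neg at h
      refine hs2 fun u => ?_
      rcases B.bd_mem v u with hh | hh | hh
      · exact Or.inr hh
      · exact Or.inl hh
      · exact absurd hh (h u)
    have hneg : ∃ b, B.bd v b = -1 := by
      by_contra h
      push_neg at h
      refine hs1 fun u => ?_
      rcases B.bd_mem v u with hh | hh | hh
      · exact absurd hh (h u)
      · exact Or.inl hh
      · exact Or.inr hh
    obtain ⟨a, ha⟩ := hpos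
    obtain ⟨b, hb⟩ := hneg
    obtain ⟨B', hdeg, hne⟩ := not_unique_of_mixed ha hb
    exact hne (hu B' hdeg)
  · by_contra hc
    push_neg at hc
    obtain ⟨p, q, hp, hq, hpq⟩ := (Set.one_lt_ncard_iff (Set.toFinite _)).mp hc
    obtain ⟨a, b⟩ := p
    obtain ⟨c, d⟩ := q
    obtain ⟨B', hdeg, hne⟩ := not_unique_two_missing hp.1 hq.1 hp.2 hq.2 hpq
    exact hne (hu B' hdeg)

lemma abs_val_full {e : ℤ} (he : e = 1 ∨ e = -1) (hn : 2 ≤ n) :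
    |e * ((n : ℤ) - 1)| = (n : ℤ) - 1 := by
  have h2 : (2 : ℤ) ≤ (n : ℤ) := by exact_mod_cast hn
  rcases he with rfl | rfl
  · rw [one_mul, abs_of_nonneg (by omega)]
  · rw [neg_one_mul, abs_neg, abs_of_nonneg (by omega)]

lemma abs_val_one_missing {e : ℤ} (he : e = 1 ∨ e = -1) (hn : 2 ≤ n) :
    |e * ((n : ℤ) - 2)| = (n : ℤ) - 2 := by
  have h2 : (2 : ℤ) ≤ (n : ℤ) := by exact_mod_cast hn
  rcases he with rfl | rfl
  · rw [one_mul, abs_of_nonneg (by omega)]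
  · rw [neg_one_mul, abs_neg, abs_of_nonneg (by omega)]

lemma part2_forward {B : Bigraph n} (hn : 2 ≤ n)
    (hpure : ∀ v, B.IsSink v ∨ B.IsSource v)
    (hcard : {p : Fin n × Fin n | p.1 < p.2 ∧ B.bd p.1 p.2 = 0}.ncard ≤ 1) :
    (∀ i, (n : ℤ) - 2 ≤ |B.netDeg i| ∧ |B.netDeg i| ≤ (n : ℤ) - 1) ∧
      {i : Fin n | |B.netDeg i| = (n : ℤ) - 2}.ncard ≤ 2 := by
  have h2 : (2 : ℤ) ≤ (n : ℤ) := by exact_mod_cast hn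
  have hM : ∀ {p q : Fin n × Fin n}, p ∈ {p : Fin n × Fin n | p.1 < p.2 ∧ B.bd p.1 p.2 = 0} →
      q ∈ {p : Fin n × Fin n | p.1 < p.2 ∧ B.bd p.1 p.2 = 0} → p = q := fun hp hq =>
    (Set.ncard_le_one_iff (Set.toFinite _)).mp hcard hp hq
  have hval : ∀ i : Fin n,
      (|B.netDeg i| = (n : ℤ) - 1 ∧ ∀ u, u ≠ i → B.bd i u ≠ 0) ∨
      (|B.netDeg i| = (n : ℤ) - 2 ∧ ∃ u, u ≠ i ∧ B.bd i u = 0) := by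
    intro i
    obtain ⟨e, he, hrow⟩ := getSign hpure i
    by_cases hz : ∃ u, u ≠ i ∧ B.bd i u = 0
    · right
      obtain ⟨w, hwi, hw0⟩ := hz
      have hwuniq : ∀ u, u ≠ i → B.bd i u = 0 → u = w := by
        intro u hui hu0
        rcases lt_or_gt_of_ne (Ne.symm hui) with h1 | h1 <;>
          rcases lt_or_gt_of_ne (Ne.symm hwi) with h2 | h2
        · have h' : u = w := congrArg Prod.snd (hM (p := (i, u)) (q := (i, w)) ⟨h1, hu0⟩ ⟨h2, hw0⟩)
          exact h'
        · have h' : i = w :=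
            congrArg Prod.fst (hM (p := (i, u)) (q := (w, i)) ⟨h1, hu0⟩ ⟨h2, (B.adj_symm i w).mp hw0⟩)
          exact absurd h'.symm hwi
        · have h' : u = i :=
            congrArg Prod.fst (hM (p := (u, i)) (q := (i, w)) ⟨h1, (B.adj_symm i u).mp hu0⟩ ⟨h2, hw0⟩)
          exact absurd h' hui
        · have h' : u = w := congrArg Prod.fst (hM (p := (u, i)) (q := (w, i))
            ⟨h1, (B.adj_symm i u).mp hu0⟩ ⟨h2, (B.adj_symm i w).mp hw0⟩)
          exact h'
      have hrest : ∀ u, u ≠ i → u ≠ w → B.bd i u = e := by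
        intro u hu1 hu2
        exact (hrow u).resolve_left fun h0 => hu2 (hwuniq u hu1 h0)
      have hd := netDeg_of_row_one_zero hwi hw0 hrest
      rw [hd, abs_val_one_missing he hn]
      exact ⟨rfl, w, hwi, hw0⟩
    · left
      push_neg at hz
      have hfull : ∀ u, u ≠ i → B.bd i u = e := fun u hu =>
        (hrow u).resolve_left (hz u hu)
      have hd := netDeg_of_row_all hfull
      rw [hd, abs_val_full he hn]
      refine ⟨rfl, fun u hu => ?_⟩
      rw [hfull u hu]
      rcases he with rfl | rfl <;> omega
  constructor
  · intro i
    rcases hval i with ⟨h, _⟩ | ⟨h, _⟩ <;> rw [h] <;> omega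
  · by_cases hex : ∃ p : Fin n × Fin n, p.1 < p.2 ∧ B.bd p.1 p.2 = 0
    · obtain ⟨⟨a, b⟩, hab, habz⟩ := hex
      have hsub : {i : Fin n | |B.netDeg i| = (n : ℤ) - 2} ⊆ {a, b} := by
        intro i hi
        simp only [Set.mem_setOf_eq] at hi
        rcases hval i with ⟨h, _⟩ | ⟨_, u, hui, hu0⟩
        · rw [hi] at h; omega
        · rcases lt_or_gt_of_ne (Ne.symm hui) with h1 | h1
          · have h' : i = a := congrArg Prod.fst (hM (p := (i, u)) (q := (a, b)) ⟨h1, hu0⟩ ⟨hab, habz⟩)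
            exact Or.inl h'
          · have h' : i = b := congrArg Prod.snd
              (hM (p := (u, i)) (q := (a, b)) ⟨h1, (B.adj_symm i u).mp hu0⟩ ⟨hab, habz⟩)
            exact Or.inr h'
      calc {i : Fin n | |B.netDeg i| = (n : ℤ) - 2}.ncard
          ≤ ({a, b} : Set (Fin n)).ncard := Set.ncard_le_ncard hsub (Set.toFinite _)
        _ ≤ 2 := (Set.ncard_insert_le a {b}).trans (by simp)
    · have hempty : {i : Fin n | |B.netDeg i| = (n : ℤ) - 2} = ∅ := by
        rw [Set.eq_empty_iff_forall_notMem]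
        intro i hi
        simp only [Set.mem_setOf_eq] at hi
        rcases hval i with ⟨h, _⟩ | ⟨_, u, hui, hu0⟩
        · rw [hi] at h; omega
        · rcases lt_or_gt_of_ne (Ne.symm hui) with h1 | h1
          · exact hex ⟨(i, u), h1, hu0⟩
          · exact hex ⟨(u, i), h1, (B.adj_symm i u).mp hu0⟩
      rw [hempty]
      simp

lemma part2_backward {B : Bigraph n} (hn : 2 ≤ n)
    (hb : ∀ i, (n : ℤ) - 2 ≤ |B.netDeg i| ∧ |B.netDeg i| ≤ (n : ℤ) - 1)
    (hS : {i : Fin n | |B.netDeg i| = (n : ℤ) - 2}.ncard ≤ 2) :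
    (∀ v, B.IsSink v ∨ B.IsSource v) ∧
      {p : Fin n × Fin n | p.1 < p.2 ∧ B.bd p.1 p.2 = 0}.ncard ≤ 1 := by
  have h2 : (2 : ℤ) ≤ (n : ℤ) := by exact_mod_cast hn
  have hrow : ∀ v : Fin n, ∃ e, (e = (1:ℤ) ∨ e = -1) ∧
      ((∀ u, u ≠ v → B.bd v u = e) ∨
        (∃ w, w ≠ v ∧ B.bd v w = 0 ∧ ∀ u, u ≠ v → u ≠ w → B.bd v u = e)) := by
    intro v
    have hbv := hb v
    have hcases : |B.netDeg v| = (n : ℤ) - 1 ∨ |B.netDeg v| = (n : ℤ) - 2 := by omega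
    rcases hcases with h | h
    · rcases (abs_eq (by omega : (0:ℤ) ≤ (n : ℤ) - 1)).mp h with h' | h'
      · exact ⟨1, Or.inl rfl, Or.inl (row_all (Or.inl rfl) (by rw [h', one_mul]))⟩
      · exact ⟨-1, Or.inr rfl, Or.inl (row_all (Or.inr rfl) (by rw [h']; ring))⟩
    · rcases (abs_eq (by omega : (0:ℤ) ≤ (n : ℤ) - 2)).mp h with h' | h'
      · exact ⟨1, Or.inl rfl, Or.inr (row_one_zero (Or.inl rfl) (by rw [h', one_mul]))⟩
      · exact ⟨-1, Or.inr rfl, Or.inr (row_one_zero (Or.inr rfl) (by rw [h']; ring))⟩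
  constructor
  · intro v
    obtain ⟨e, he, hc⟩ := hrow v
    have hval : ∀ u, B.bd v u = 0 ∨ B.bd v u = e := by
      intro u
      by_cases hu : u = v
      · subst hu; exact Or.inl (B.loopless u)
      · rcases hc with hfull | ⟨w, hwv, hw0, hrest⟩
        · exact Or.inr (hfull u hu)
        · by_cases hw : u = w
          · subst hw; exact Or.inl hw0
          · exact Or.inr (hrest u hu hw)
    rcases he with rfl | rfl
    · exact Or.inl hval
    · exact Or.inr hval
  · have hzchar : ∀ v u : Fin n, u ≠ v → B.bd v u = 0 →
        v ∈ {i : Fin n | |B.netDeg i| = (n : ℤ) - 2} := by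
      intro v u huv h0
      obtain ⟨e, he, hc⟩ := hrow v
      rcases hc with hfull | ⟨w, hwv, hw0, hrest⟩
      · rw [hfull u huv] at h0
        rcases he with rfl | rfl <;> omega
      · show |B.netDeg v| = (n : ℤ) - 2
        rw [netDeg_of_row_one_zero hwv hw0 hrest, abs_val_one_missing he hn]
    have key3 : ∀ x y z : Fin n, x ∈ {i : Fin n | |B.netDeg i| = (n : ℤ) - 2} →
        y ∈ {i : Fin n | |B.netDeg i| = (n : ℤ) - 2} →
        z ∈ {i : Fin n | |B.netDeg i| = (n : ℤ) - 2} →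
        x ≠ y → x ≠ z → y ≠ z → False := by
      intro x y z hx hy hz hxy hxz hyz
      have hsub : ({x, y, z} : Set (Fin n)) ⊆ {i : Fin n | |B.netDeg i| = (n : ℤ) - 2} := by
        intro t ht
        rcases ht with rfl | rfl | rfl
        exacts [hx, hy, hz]
      have hle := Set.ncard_le_ncard hsub (Set.toFinite _)
      have h3 : ({x, y, z} : Set (Fin n)).ncard = 3 := by
        rw [Set.ncard_insert_of_notMem (by simp [hxy, hxz]) (Set.toFinite _),
          Set.ncard_insert_of_notMem (by simp [hyz]) (Set.toFinite _),
          Set.ncard_singleton]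
      omega
    rw [Set.ncard_le_one_iff (Set.toFinite _)]
    rintro ⟨a, b⟩ ⟨c, d⟩ ⟨hab, habz⟩ ⟨hcd, hcdz⟩
    have haS := hzchar a b (ne_of_gt hab) habz
    have hbS := hzchar b a (ne_of_lt hab) ((B.adj_symm a b).mp habz)
    have hcS := hzchar c d (ne_of_gt hcd) hcdz
    have hdS := hzchar d c (ne_of_lt hcd) ((B.adj_symm c d).mp hcdz)
    have hab' : a ≠ b := ne_of_lt hab
    have hcd' : c ≠ d := ne_of_lt hcd
    by_cases hac : a = c
    · subst hac
      by_cases hbd : b = d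
      · subst hbd; rfl
      · exact absurd (key3 a b d haS hbS hdS hab' (ne_of_lt hcd) hbd) not_false
    · by_cases hbc : b = c
      · subst hbc
        have had : a ≠ d := fun h => absurd (h ▸ (hab.trans hcd)) (lt_irrefl _)
        exact absurd (key3 a b d haS hbS hdS hab' had (ne_of_lt hcd)) not_false
      · exact absurd (key3 a b c haS hbS hcS hab' hac hbc) not_false

end BigraphAux

/-- (1) The net-degree sequence of a bigraph `B` is uniquely realizable iff every node
of `B` is a sink or a source and at most one pair of distinct nodes is not joined by an
edge. (2) Equivalently, for `n ≥ 2`, a net-degree sequence `d` of a bigraph is uniquely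
realizable iff `n−2 ≤ |dᵢ| ≤ n−1` for all `i` and at most two entries of `d` have
absolute value `n−2`. -/
theorem uniquely_realizable_bigraph_characterization (n : ℕ) :
    (∀ B : Bigraph n,
      (∀ B' : Bigraph n, B'.netDeg = B.netDeg → B' = B) ↔
        ((∀ v, B.IsSink v ∨ B.IsSource v) ∧
          {p : Fin n × Fin n | p.1 < p.2 ∧ B.bd p.1 p.2 = 0}.ncard ≤ 1)) ∧
    (2 ≤ n → ∀ d : Fin n → ℤ, (∃ B : Bigraph n, B.netDeg = d) →
      ((∃! B : Bigraph n, B.netDeg = d) ↔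
        ((∀ i, (n : ℤ) - 2 ≤ |d i| ∧ |d i| ≤ (n : ℤ) - 1) ∧
          {i : Fin n | |d i| = (n : ℤ) - 2}.ncard ≤ 2))) := by
  constructor
  · intro B
    constructor
    · exact BigraphAux.pure_missing_of_unique
    · rintro ⟨h1, h2⟩
      exact BigraphAux.unique_of_pure_missing h1 h2
  · intro hn d hex
    obtain ⟨B, rfl⟩ := hex
    constructor
    · intro huni
      have hu : ∀ B' : Bigraph n, B'.netDeg = B.netDeg → B' = B := by
        obtain ⟨B₀, _, huniq⟩ := huni
        intro B' h'
        rw [huniq B' h', huniq B rfl]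
      obtain ⟨hpure, hcard⟩ := BigraphAux.pure_missing_of_unique hu
      exact BigraphAux.part2_forward hn hpure hcard
    · rintro ⟨hb, hS⟩
      obtain ⟨hpure, hcard⟩ := BigraphAux.part2_backward hn hb hS
      exact ⟨B, rfl, fun B' h' => BigraphAux.unique_of_pure_missing hpure hcard B' h'⟩
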